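/- Let G be a group and A, B subgroups of G such that A is normal in the subgroup generated by A ∪ B but B is not normal in that subgroup. Then A and B are not subgroup-independent. -/

import Mathlib

/-- If `A` is normal in the subgroup `J = A ⊔ B` generated by `A ∪ B` but
`B` is not normal in `J`, then `A` and `B` are not subgroup-independent. -/
theorem not_independent_of_normal_not_normal {G : Type*} [Group G] (A B : Subgroup G)
    (hA : (A.subgroupOf (A ⊔ B)).Normal) (hB : ¬ (B.subgroupOf (A ⊔ B)).Normal) :
    ¬ ∀ (α : A →* A) (β : B →* B), ∃ γ : ↥(A ⊔ B) →* ↥(A ⊔ B),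
      (∀ (a : G) (ha : a ∈ A),
        (γ ⟨a, Subgroup.mem_sup_left ha⟩ : G) = (α ⟨a, ha⟩ : G)) ∧
      (∀ (b : G) (hb : b ∈ B),
        (γ ⟨b, Subgroup.mem_sup_right hb⟩ : G) = (β ⟨b, hb⟩ : G)) := by
  intro h
  -- Find `a ∈ A`, `b ∈ B` which do not commute.
  obtain ⟨a, ha, b, hb, hne⟩ : ∃ a ∈ A, ∃ b ∈ B, b * a * b⁻¹ ≠ a := by
    by_contra hcomm
    push_neg at hcomm
    apply hB
    -- every element of A commutes with every element of B
    have hcomm' : ∀ x ∈ A, ∀ z ∈ B, Commute x z := by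
      intro x hx z hz
      exact (mul_inv_eq_iff_eq_mul.mp (hcomm x hx z hz)).symm
    rw [Subgroup.normal_subgroupOf_iff le_sup_right]
    intro y k hy hk
    -- show every element of `A ⊔ B` normalizes `B`
    have hle : A ⊔ B ≤ Subgroup.normalizer (B : Set G) := by
      apply sup_le
      · intro x hx
        rw [Subgroup.mem_normalizer_iff]
        intro z
        constructor
        · intro hz
          have : x * z * x⁻¹ = z := mul_inv_eq_iff_eq_mul.mpr (hcomm' x hx z hz)
          rw [this]; exact hz
        · intro hz
          have hcw : Commute x (x * z * x⁻¹) := hcomm' x hx _ hz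
          have h2 : x⁻¹ * (x * z * x⁻¹) * x = x * z * x⁻¹ := by
            rw [mul_assoc, ← hcw]
            group
          have : z = x * z * x⁻¹ := by
            calc z = x⁻¹ * (x * z * x⁻¹) * x := by group
              _ = x * z * x⁻¹ := h2
          rw [this]; exact hz
      · exact Subgroup.le_normalizer
    exact (Subgroup.mem_normalizer_iff.mp (hle hk)) y |>.mp hy
  -- Apply independence to `α = id`, `β = 1`.
  obtain ⟨γ, hγA, hγB⟩ := h (MonoidHom.id A) 1
  have hcA : b * a * b⁻¹ ∈ A := by
    have := hA.conj_mem ⟨a, Subgroup.mem_sup_left ha⟩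
      (Subgroup.mem_subgroupOf.mpr ha) ⟨b, Subgroup.mem_sup_right hb⟩
    exact Subgroup.mem_subgroupOf.mp this
  have e1 : (γ ⟨b * a * b⁻¹, Subgroup.mem_sup_left hcA⟩ : G) = b * a * b⁻¹ := by
    simpa using hγA _ hcA
  have e2 : γ ⟨b, Subgroup.mem_sup_right hb⟩ = 1 := by
    ext
    simpa using hγB b hb
  have e3 : (γ ⟨a, Subgroup.mem_sup_left ha⟩ : G) = a := by
    simpa using hγA a ha
  have key : (⟨b * a * b⁻¹, Subgroup.mem_sup_left hcA⟩ : ↥(A ⊔ B)) =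
      ⟨b, Subgroup.mem_sup_right hb⟩ * ⟨a, Subgroup.mem_sup_left ha⟩ *
        (⟨b, Subgroup.mem_sup_right hb⟩ : ↥(A ⊔ B))⁻¹ := rfl
  rw [key, map_mul, map_mul, map_inv, e2] at e1
  simp only [one_mul, inv_one, mul_one] at e1
  exact hne (e3.symm.trans e1).symm
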